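/- Let p be a prime, n a positive integer, and m an integer with 0 < m ≤ p^n. If a_1, …, a_m are integers, then p^{n - ⌊log_p m⌋} divides the integer a_1·C(p^n, 1) + a_2·C(p^n, 2) + ⋯ + a_m·C(p^n, m), where ⌊log_p m⌋ is the smallest integer d with p^{d+1} > m. -/

import Mathlib

/-- For a prime `p`, a positive integer `n`, and `0 < m ≤ p^n`, any integer linear
combination `a_1·C(p^n,1) + ⋯ + a_m·C(p^n,m)` of the binomial coefficients is
divisible by `p^{n - ⌊log_p m⌋}`. -/
theorem pow_dvd_sum_mul_choose
    (p : ℕ) (hp : p.Prime) (n : ℕ) (hn : 0 < n) (m : ℕ) (hm : 0 < m)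
    (hmp : m ≤ p ^ n) (a : ℕ → ℤ) :
    (p : ℤ) ^ (n - Nat.log p m) ∣
      ∑ i ∈ Finset.Icc 1 m, a i * (Nat.choose (p ^ n) i : ℤ) := by
  refine Finset.dvd_sum fun i hi => Dvd.dvd.mul_left ?_ _
  simp only [Finset.mem_Icc] at hi
  have h1 : 1 ≤ i := hi.1
  have h2 : i ≤ m := hi.2
  have hkn : i ≤ p ^ n := le_trans h2 hmp
  have hmult : multiplicity p i ≤ Nat.log p m := by
    have hdvd : p ^ multiplicity p i ∣ i := pow_multiplicity_dvd p i
    have hle : p ^ multiplicity p i ≤ i := Nat.le_of_dvd (by omega) hdvd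
    exact (Nat.le_log_iff_pow_le hp.one_lt (by omega)).2 (hle.trans h2)
  have key : emultiplicity p (Nat.choose (p ^ n) i) = ↑(n - multiplicity p i) :=
    Nat.Prime.emultiplicity_choose_prime_pow hp hkn (by omega)
  have hdvd : p ^ (n - Nat.log p m) ∣ Nat.choose (p ^ n) i := by
    apply pow_dvd_of_le_emultiplicity
    rw [key]
    exact_mod_cast Nat.sub_le_sub_left hmult n
  exact_mod_cast Int.natCast_dvd_natCast.2 hdvd
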